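/- Let V be a d×d positive definite matrix, and for t = 1,…,n let X_t be d×m_t matrices with V_0 = V and V_t = V_{t-1} + X_t X_tᵀ. If det(V) > 0, then ∏_{t=1}^n (1 + tr(X_tᵀ V_{t-1}⁻¹ X_t)) ≤ det(V_n)/det(V). -/

import Mathlib

open Matrix Finset

lemma one_add_sum_le_prod' {ι : Type*} (s : Finset ι) (f : ι → ℝ) (hf : ∀ i, 0 ≤ f i) :
    1 + ∑ i ∈ s, f i ≤ ∏ i ∈ s, (1 + f i) := by
  classical
  induction s using Finset.induction_on with
  | empty => simp
  | @insert a s' hx ih =>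
    rw [Finset.sum_insert hx, Finset.prod_insert hx]
    have h1 : 0 ≤ ∑ i ∈ s', f i := Finset.sum_nonneg fun i _ => hf i
    nlinarith [hf a, ih]

lemma psd_trace_nonneg {k : ℕ} (M : Matrix (Fin k) (Fin k) ℝ) (hM : M.PosSemidef) :
    0 ≤ M.trace := by
  rw [Matrix.trace]
  refine Finset.sum_nonneg fun i _ => ?_
  have := hM.dotProduct_mulVec_nonneg (Pi.single i 1)
  simpa [Matrix.mulVec_single, Matrix.diag, dotProduct, Pi.single_apply] using this

lemma det_one_add_psd {k : ℕ} (M : Matrix (Fin k) (Fin k) ℝ) (hM : M.PosSemidef) :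
    1 + M.trace ≤ (1 + M).det := by
  classical
  have h := hM.isHermitian
  set U : Matrix (Fin k) (Fin k) ℝ := (h.eigenvectorUnitary : Matrix (Fin k) (Fin k) ℝ) with hUdef
  have hU : U * star U = 1 := (Matrix.mem_unitaryGroup_iff).mp h.eigenvectorUnitary.2
  have hspec : M = U * diagonal (RCLike.ofReal ∘ h.eigenvalues) * star U := h.spectral_theorem
  have hUdet : U.det * (star U).det = 1 := by rw [← Matrix.det_mul, hU, Matrix.det_one]
  have htr : M.trace = ∑ i, h.eigenvalues i := by
    conv_lhs => rw [hspec]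
    rw [Matrix.trace_mul_comm, ← Matrix.mul_assoc, mul_eq_one_comm.mp hU, Matrix.one_mul,
      Matrix.trace_diagonal]
    simp [RCLike.ofReal]
  have hone : (1 : Matrix (Fin k) (Fin k) ℝ) + M
      = U * (diagonal (fun i => 1 + h.eigenvalues i)) * star U := by
    have hd : (diagonal (fun i => (1:ℝ) + h.eigenvalues i))
        = 1 + diagonal (RCLike.ofReal ∘ h.eigenvalues) := by
      rw [← Matrix.diagonal_one, Matrix.diagonal_add]
      simp [RCLike.ofReal, Function.comp]
    rw [hd, Matrix.mul_add, Matrix.add_mul, Matrix.mul_one, hU, ← hspec]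
  have hdet : (1 + M).det = ∏ i, (1 + h.eigenvalues i) := by
    rw [hone, Matrix.det_mul, Matrix.det_mul, mul_right_comm, hUdet, one_mul,
      Matrix.det_diagonal]
  rw [htr, hdet]
  exact one_add_sum_le_prod' _ _ fun i => hM.eigenvalues_nonneg i

theorem stmt11 (d n : ℕ) (V : Matrix (Fin d) (Fin d) ℝ) (hV : V.PosDef)
    (m : ℕ → ℕ) (X : (t : ℕ) → Matrix (Fin d) (Fin (m t)) ℝ)
    (W : ℕ → Matrix (Fin d) (Fin d) ℝ)
    (hW0 : W 0 = V)
    (hW : ∀ t, W (t + 1) = W t + X t * (X t)ᵀ)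
    (hdet : 0 < V.det) :
    ∏ t ∈ Finset.range n, (1 + ((X t)ᵀ * (W t)⁻¹ * X t).trace) ≤ (W n).det / V.det := by
  classical
  have hWpd : ∀ t, (W t).PosDef := by
    intro t
    induction t with
    | zero => rw [hW0]; exact hV
    | succ t ih =>
      rw [hW t]
      have hpsd : (X t * (X t)ᵀ).PosSemidef := by
        have := Matrix.posSemidef_self_mul_conjTranspose (X t)
        simpa using this
      exact ih.add_posSemidef hpsd
  have hpsdM : ∀ t, ((X t)ᵀ * (W t)⁻¹ * X t).PosSemidef := by
    intro t
    have hinv : ((W t)⁻¹).PosSemidef := ((hWpd t).inv).posSemidef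
    have := hinv.conjTranspose_mul_mul_same (X t)
    simpa using this
  have hstep : ∀ t, (W t).det * (1 + ((X t)ᵀ * (W t)⁻¹ * X t).trace) ≤ (W (t+1)).det := by
    intro t
    have hWt := hWpd t
    have hinv : (W t) * (W t)⁻¹ = 1 :=
      Matrix.mul_nonsing_inv _ (isUnit_iff_ne_zero.mpr hWt.det_pos.ne')
    have hfac : W (t+1) = W t * (1 + (W t)⁻¹ * X t * (X t)ᵀ) := by
      rw [hW t, Matrix.mul_add, Matrix.mul_one, ← Matrix.mul_assoc, ← Matrix.mul_assoc, hinv,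
        Matrix.one_mul]
    have hdet1 : (W (t+1)).det = (W t).det * (1 + (X t)ᵀ * (W t)⁻¹ * X t).det := by
      rw [hfac, Matrix.det_mul, Matrix.det_one_add_mul_comm ((W t)⁻¹ * X t) ((X t)ᵀ),
        ← Matrix.mul_assoc]
    rw [hdet1]
    exact mul_le_mul_of_nonneg_left (det_one_add_psd _ (hpsdM t)) hWt.det_pos.le
  induction n with
  | zero => simp [hW0, le_div_iff₀ hdet]
  | succ n ih =>
    rw [Finset.prod_range_succ]
    have htr : 0 ≤ ((X n)ᵀ * (W n)⁻¹ * X n).trace := psd_trace_nonneg _ (hpsdM n)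
    calc (∏ t ∈ Finset.range n, (1 + ((X t)ᵀ * (W t)⁻¹ * X t).trace))
          * (1 + ((X n)ᵀ * (W n)⁻¹ * X n).trace)
        ≤ (W n).det / V.det * (1 + ((X n)ᵀ * (W n)⁻¹ * X n).trace) :=
          mul_le_mul_of_nonneg_right ih (by linarith)
      _ ≤ (W (n+1)).det / V.det := by
          rw [div_mul_eq_mul_div, div_le_div_iff_of_pos_right hdet]
          exact hstep n
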